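/- Let p(c, x₁) be a real polynomial of degree n ≥ 1 in c with resultant Rₙ = Res(p, ∂p/∂c; c) ≢ 0, and let α₁ > α₂ > ⋯ > α_m be the real zeros of Rₙ. Suppose for some k ∈ {1,…,m} there exist β₁ > α₁ > β₂ > α₂ > ⋯ > β_k > α_k such that for all 1 ≤ i ≤ k: p(c, βᵢ) = 0 has no real solution c, and p(c, αᵢ) = 0 has no solution c ∈ J, where J ⊆ ℝ is a closed set containing all admissible input values. Then every point (c, x₁) on the curve p = 0 with c ∈ J satisfies x₁ < α_k. -/

import Mathlib

open Polynomial Filter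

/-- The Sylvester matrix of `f` and `g`, viewed as polynomials of formal degrees
`m` and `k` respectively: `k` shifted rows of coefficients of `f` followed by
`m` shifted rows of coefficients of `g`. -/
noncomputable def sylvester {R : Type*} [CommRing R] (m k : ℕ) (f g : Polynomial R) :
    Matrix (Fin (k + m)) (Fin (k + m)) R :=
  Matrix.of fun i j =>
    if (i : ℕ) < k then (if (i : ℕ) ≤ (j : ℕ) then f.coeff ((j : ℕ) - (i : ℕ)) else 0)
    else (if (i : ℕ) - k ≤ (j : ℕ) then g.coeff ((j : ℕ) - ((i : ℕ) - k)) else 0)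

/-- The resultant of `f` and `g` with formal degrees `m` and `k`. -/
noncomputable def resultant {R : Type*} [CommRing R] (m k : ℕ) (f g : Polynomial R) : R :=
  (sylvester m k f g).det

/-- Evaluation at `(c, x)` of a bivariate polynomial `p ∈ ℝ[x][c]`
(outer variable `c`, coefficients in `ℝ[x]`). -/
noncomputable def evalCX (c x : ℝ) (p : Polynomial (Polynomial ℝ)) : ℝ :=
  (p.map (Polynomial.evalRingHom x)).eval c

lemma evalCX_eq_sum (p : Polynomial (Polynomial ℝ)) (c x : ℝ) :
    evalCX c x p = ∑ i ∈ Finset.range (p.natDegree + 1), (p.coeff i).eval x * c ^ i := by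
  rw [evalCX, Polynomial.eval_eq_sum_range'
    (lt_of_le_of_lt (Polynomial.natDegree_map_le (f := Polynomial.evalRingHom x) (p := p))
    (Nat.lt_succ_self _))]
  simp [Polynomial.coeff_map]

lemma continuous_evalCX (p : Polynomial (Polynomial ℝ)) :
    Continuous (fun z : ℝ × ℝ => evalCX z.1 z.2 p) := by
  simp only [evalCX_eq_sum]
  exact continuous_finset_sum _ fun i _ =>
    ((p.coeff i).continuous.comp continuous_snd).mul ((continuous_fst.pow i))

lemma eval_resultant (p : Polynomial (Polynomial ℝ)) (n : ℕ) (x : ℝ) :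
    (resultant n (n-1) p (Polynomial.derivative p)).eval x
      = resultant n (n-1) (p.map (Polynomial.evalRingHom x))
          (Polynomial.derivative (p.map (Polynomial.evalRingHom x))) := by
  have h := RingHom.map_det (Polynomial.evalRingHom x) (sylvester n (n-1) p (Polynomial.derivative p))
  rw [_root_.resultant, _root_.resultant]
  rw [show ((sylvester n (n-1) p (Polynomial.derivative p)).det).eval x
      = (Polynomial.evalRingHom x) ((sylvester n (n-1) p (Polynomial.derivative p)).det) from rfl, h]
  congr 1
  ext i j
  simp only [RingHom.mapMatrix_apply, _root_.sylvester, Matrix.map_apply, Matrix.of_apply,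
    Polynomial.derivative_map, apply_ite (Polynomial.evalRingHom x), map_zero,
    Polynomial.coe_evalRingHom, Polynomial.eval_zero]
  split_ifs <;> simp [Polynomial.coeff_map]

lemma row_sum (f : Polynomial ℝ) (s N : ℕ) (hN : f.natDegree < N - s) (hsN : s ≤ N) (c : ℝ) :
    ∑ j ∈ Finset.range N, (if s ≤ j then f.coeff (j - s) else 0) * c ^ j
      = c ^ s * f.eval c := by
  have h1 : ∀ j ∈ Finset.range N, (if s ≤ j then f.coeff (j - s) else 0) * c ^ j
      = if s ≤ j then f.coeff (j - s) * c ^ j else 0 := by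
    intro j _; split_ifs <;> simp
  rw [Finset.sum_congr rfl h1, Finset.range_eq_Ico,
    ← Finset.sum_Ico_consecutive _ (Nat.zero_le s) hsN]
  have h2 : ∑ j ∈ Finset.Ico 0 s, (if s ≤ j then f.coeff (j - s) * c ^ j else 0) = 0 := by
    apply Finset.sum_eq_zero; intro j hj
    rw [Finset.mem_Ico] at hj
    rw [if_neg (by omega)]
  rw [h2, zero_add]
  have h3 : ∀ j ∈ Finset.Ico s N, (if s ≤ j then f.coeff (j - s) * c ^ j else 0)
      = f.coeff (j - s) * c ^ j := by
    intro j hj; rw [Finset.mem_Ico] at hj; rw [if_pos hj.1]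
  rw [Finset.sum_congr rfl h3, Finset.sum_Ico_eq_sum_range]
  rw [Polynomial.eval_eq_sum_range' hN, Finset.mul_sum]
  apply Finset.sum_congr rfl
  intro t _
  rw [Nat.add_sub_cancel_left, pow_add]
  ring

lemma res_eq_zero_of_common_root (q : Polynomial ℝ) (n : ℕ) (hn : 1 ≤ n)
    (hq : q.natDegree ≤ n) (c : ℝ) (h1 : q.eval c = 0) (h2 : q.derivative.eval c = 0) :
    resultant n (n-1) q q.derivative = 0 := by
  rw [_root_.resultant, ← Matrix.exists_mulVec_eq_zero_iff]
  refine ⟨fun j => c ^ (j : ℕ), ?_, ?_⟩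
  · intro hv
    have h0 : (1 : ℝ) = 0 := by
      have := congrFun hv ⟨0, by omega⟩
      simpa using this
    norm_num at h0
  · funext i
    rw [Matrix.mulVec, dotProduct]
    simp only [_root_.sylvester, Matrix.of_apply, Pi.zero_apply]
    by_cases hi : (i : ℕ) < n - 1
    · simp only [if_pos hi]
      rw [Fin.sum_univ_eq_sum_range (fun j : ℕ => (if (i:ℕ) ≤ j then q.coeff (j - (i:ℕ)) else 0) * c ^ j) (n-1+n)]
      rw [row_sum q (i:ℕ) (n-1+n) (by omega) (by omega) c, h1, mul_zero]
    · simp only [if_neg hi]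
      rw [Fin.sum_univ_eq_sum_range (fun j : ℕ => (if (i:ℕ) - (n-1) ≤ j then q.derivative.coeff (j - ((i:ℕ) - (n-1))) else 0) * c ^ j) (n-1+n)]
      have hd : q.derivative.natDegree ≤ n - 1 :=
        le_trans (Polynomial.natDegree_derivative_le q) (by omega)
      have hi2 : (i : ℕ) < n - 1 + n := i.isLt
      rw [row_sum q.derivative ((i:ℕ) - (n-1)) (n-1+n) (by omega) (by omega) c, h2, mul_zero]

lemma res_eq_zero_of_coeff_zero (q : Polynomial ℝ) (n : ℕ) (hn : 1 ≤ n)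
    (hq : q.natDegree ≤ n) (h : q.coeff n = 0) :
    resultant n (n-1) q q.derivative = 0 := by
  have hcoeff : ∀ t, n ≤ t → q.coeff t = 0 := by
    intro t ht
    rcases eq_or_lt_of_le ht with rfl | ht'
    · exact h
    · exact Polynomial.coeff_eq_zero_of_natDegree_lt (lt_of_le_of_lt hq ht')
  apply Matrix.det_eq_zero_of_column_eq_zero (⟨n-1+n-1, by omega⟩ : Fin (n-1+n))
  intro i
  simp only [_root_.sylvester, Matrix.of_apply]
  by_cases hi : (i : ℕ) < n - 1
  · rw [if_pos hi, if_pos (by omega)]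
    exact hcoeff _ (by omega)
  · rw [if_neg hi, if_pos (by omega)]
    rw [Polynomial.coeff_derivative]
    have h0 : q.coeff (n-1+n-1 - ((i:ℕ) - (n-1)) + 1) = 0 := by
      apply hcoeff
      have := i.isLt
      omega
    rw [h0, zero_mul]

lemma root_bound (q : Polynomial ℝ) (n : ℕ) (hn : 1 ≤ n) (hq : q.natDegree ≤ n)
    (ha : q.coeff n ≠ 0) (M : ℝ) (hM : ∀ i, i < n → |q.coeff i| ≤ M)
    (c : ℝ) (hc : q.eval c = 0) : |c| ≤ max 1 (n * M / |q.coeff n|) := by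
  by_cases h1 : |c| ≤ 1
  · exact le_trans h1 (le_max_left _ _)
  push_neg at h1
  refine le_trans ?_ (le_max_right _ _)
  have hsum : (0:ℝ) = ∑ i ∈ Finset.range (n+1), q.coeff i * c ^ i := by
    rw [← Polynomial.eval_eq_sum_range' (lt_of_le_of_lt hq (Nat.lt_succ_self _)), hc]
  rw [Finset.sum_range_succ] at hsum
  have key : q.coeff n * c ^ n = -∑ i ∈ Finset.range n, q.coeff i * c ^ i := by
    linarith [hsum]
  have habs : |q.coeff n| * |c| ^ n ≤ n * M * |c| ^ (n-1) := by
    calc |q.coeff n| * |c| ^ n = |q.coeff n * c ^ n| := by rw [abs_mul, abs_pow]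
    _ = |∑ i ∈ Finset.range n, q.coeff i * c ^ i| := by rw [key, abs_neg]
    _ ≤ ∑ i ∈ Finset.range n, |q.coeff i * c ^ i| := Finset.abs_sum_le_sum_abs _ _
    _ ≤ ∑ i ∈ Finset.range n, M * |c| ^ (n-1) := by
        apply Finset.sum_le_sum
        intro i hi
        rw [Finset.mem_range] at hi
        rw [abs_mul, abs_pow]
        have h2 : |c| ^ i ≤ |c| ^ (n-1) := pow_le_pow_right₀ (le_of_lt h1) (by omega)
        have h3 : (0:ℝ) ≤ |c| ^ i := by positivity
        have := hM i hi
        nlinarith [abs_nonneg (q.coeff i)]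
    _ = n * M * |c| ^ (n-1) := by rw [Finset.sum_const, Finset.card_range]; ring
  have hpow : |c| ^ n = |c| ^ (n-1) * |c| := by
    rw [← pow_succ]; congr 1; omega
  rw [hpow, ← mul_assoc] at habs
  have hpos : (0:ℝ) < |c| ^ (n-1) := by positivity
  have h4 : |q.coeff n| * |c| ≤ n * M := by
    have h5 : (|q.coeff n| * |c|) * |c|^(n-1) ≤ (n * M) * |c|^(n-1) := by
      nlinarith [habs]
    exact le_of_mul_le_mul_right h5 hpos
  rw [le_div_iff₀ (abs_pos.mpr ha)]
  linarith [h4]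

lemma sign_change (q : Polynomial ℝ) (c₀ : ℝ) (h0 : q.eval c₀ = 0)
    (h1 : q.derivative.eval c₀ ≠ 0) :
    ∃ c₁ c₂ : ℝ, c₁ ≤ c₂ ∧ q.eval c₁ * q.eval c₂ < 0 := by
  obtain ⟨r, hr⟩ := (Polynomial.dvd_iff_isRoot.mpr h0)
  have hrc : r.eval c₀ = q.derivative.eval c₀ := by
    rw [hr]
    simp [Polynomial.derivative_mul]
  have hrc0 : r.eval c₀ ≠ 0 := hrc ▸ h1
  have hcont : ContinuousAt (fun c => r.eval c) c₀ := (r.continuous).continuousAt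
  have hev : ∀ᶠ c in nhds c₀, |r.eval c - r.eval c₀| < |r.eval c₀| := by
    have : ContinuousAt (fun c => |r.eval c - r.eval c₀|) c₀ :=
      (hcont.sub continuousAt_const).abs
    have h2 : |r.eval c₀ - r.eval c₀| < |r.eval c₀| := by
      simpa using abs_pos.mpr hrc0
    exact this.eventually_lt continuousAt_const h2
  rw [Metric.eventually_nhds_iff] at hev
  obtain ⟨ε, hε, hball⟩ := hev
  set η := ε / 2 with hη
  have hη0 : 0 < η := by positivity
  refine ⟨c₀ - η, c₀ + η, by linarith, ?_⟩
  have hsame : ∀ c : ℝ, dist c c₀ < ε → r.eval c * r.eval c₀ > 0 := by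
    intro c hcd
    have := hball hcd
    rcases abs_cases (r.eval c₀) with ⟨hb1, hb2⟩ | ⟨hb1, hb2⟩ <;>
      rcases abs_cases (r.eval c - r.eval c₀) with ⟨hc1, hc2⟩ | ⟨hc1, hc2⟩ <;>
      nlinarith
  have hd1 : dist (c₀ - η) c₀ < ε := by
    rw [Real.dist_eq]; rw [abs_of_nonpos (by linarith)]; linarith
  have hd2 : dist (c₀ + η) c₀ < ε := by
    rw [Real.dist_eq]; rw [abs_of_nonneg (by linarith)]; linarith
  have hs1 := hsame _ hd1
  have hs2 := hsame _ hd2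
  have he1 : q.eval (c₀ - η) = -η * r.eval (c₀ - η) := by
    rw [hr]; simp
  have he2 : q.eval (c₀ + η) = η * r.eval (c₀ + η) := by
    rw [hr]; simp
  rw [he1, he2]
  nlinarith [mul_pos hs1 hs2, mul_pos hη0 hη0, sq_nonneg (r.eval c₀), sq_nonneg (r.eval (c₀-η) * r.eval (c₀+η))]

lemma exists_root_of_mul_neg (f : ℝ → ℝ) (hf : Continuous f) (c₁ c₂ : ℝ) (h12 : c₁ ≤ c₂)
    (h : f c₁ * f c₂ < 0) : ∃ c, f c = 0 := by
  rcases lt_or_ge (f c₁) 0 with h1 | h1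
  · have h2 : 0 < f c₂ := by nlinarith
    have : (0:ℝ) ∈ Set.Icc (f c₁) (f c₂) := ⟨le_of_lt h1, le_of_lt h2⟩
    obtain ⟨c, _, hc⟩ := intermediate_value_Icc h12 hf.continuousOn this
    exact ⟨c, hc⟩
  · have h2 : f c₂ < 0 := by nlinarith
    have h1' : 0 < f c₁ := by nlinarith
    have : (0:ℝ) ∈ Set.Icc (f c₂) (f c₁) := ⟨le_of_lt h2, le_of_lt h1'⟩
    obtain ⟨c, _, hc⟩ := intermediate_value_Icc' h12 hf.continuousOn this
    exact ⟨c, hc⟩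

lemma interval_lemma (p : Polynomial (Polynomial ℝ)) (n : ℕ) (hn : 1 ≤ n)
    (hdeg : p.natDegree = n) (u v : ℝ) (huv : u ≤ v)
    (hR : ∀ y ∈ Set.Icc u v, resultant n (n-1) (p.map (Polynomial.evalRingHom y))
      (Polynomial.derivative (p.map (Polynomial.evalRingHom y))) ≠ 0)
    (w : ℝ) (hw : w ∈ Set.Icc u v) (hwempty : ∀ c, evalCX c w p ≠ 0)
    (x : ℝ) (hx : x ∈ Set.Icc u v) (c : ℝ) (hc : evalCX c x p = 0) : False := by
  have hqdeg : ∀ y : ℝ, (p.map (Polynomial.evalRingHom y)).natDegree ≤ n :=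
    fun y => hdeg ▸ Polynomial.natDegree_map_le (f := Polynomial.evalRingHom y) (p := p)
  have hqcoeff : ∀ (y : ℝ) (i : ℕ), (p.map (Polynomial.evalRingHom y)).coeff i
      = (p.coeff i).eval y := fun y i => Polynomial.coeff_map _ _
  have hAn : ∀ y ∈ Set.Icc u v, (p.coeff n).eval y ≠ 0 := by
    intro y hy h0
    exact hR y hy (res_eq_zero_of_coeff_zero _ n hn (hqdeg y) (by rw [hqcoeff]; exact h0))
  -- uniform root bound
  set g : ℝ → ℝ := fun y =>
    max 1 ((n : ℝ) * (∑ i ∈ Finset.range n, |(p.coeff i).eval y|) / |(p.coeff n).eval y|) with hg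
  have hgc : ContinuousOn g (Set.Icc u v) := by
    have hnum : ContinuousOn (fun y : ℝ => (n : ℝ) * ∑ i ∈ Finset.range n, |(p.coeff i).eval y|)
        (Set.Icc u v) :=
      (continuous_const.mul (continuous_finset_sum _
        (fun i _ => (p.coeff i).continuous.abs))).continuousOn
    have hden : ContinuousOn (fun y : ℝ => |(p.coeff n).eval y|) (Set.Icc u v) :=
      ((p.coeff n).continuous.abs).continuousOn
    have := ContinuousOn.sup (continuousOn_const (c := (1:ℝ)))
      (hnum.div hden (fun y hy => abs_ne_zero.mpr (hAn y hy)))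
    simpa [hg, max_def] using this
  obtain ⟨y₀, hy₀, hmax⟩ := isCompact_Icc.exists_isMaxOn (Set.nonempty_Icc.mpr huv) hgc
  set B := g y₀ with hB
  have hbound : ∀ y ∈ Set.Icc u v, ∀ c', evalCX c' y p = 0 → |c'| ≤ B := by
    intro y hy c' hc'
    have := root_bound (p.map (Polynomial.evalRingHom y)) n hn (hqdeg y)
      (by rw [hqcoeff]; exact hAn y hy)
      (∑ i ∈ Finset.range n, |(p.coeff i).eval y|)
      (by
        intro i hi
        rw [hqcoeff]
        exact Finset.single_le_sum (f := fun i => |(p.coeff i).eval y|)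
          (fun j _ => abs_nonneg _) (Finset.mem_range.mpr hi))
      c' hc'
    rw [hqcoeff] at this
    exact le_trans this (hmax hy)
  -- closed set
  set Z : Set (ℝ × ℝ) := {z | z.1 ∈ Set.Icc u v ∧ z.2 ∈ Set.Icc (-B) B ∧ evalCX z.2 z.1 p = 0}
    with hZ
  have hZeq : Z = (Prod.fst ⁻¹' Set.Icc u v) ∩ (Prod.snd ⁻¹' Set.Icc (-B) B) ∩
      {z : ℝ × ℝ | evalCX z.2 z.1 p = 0} := by
    ext z
    simp only [hZ, Set.mem_setOf_eq, Set.mem_inter_iff, Set.mem_preimage]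
    tauto
  have hZclosed : IsClosed Z := by
    rw [hZeq]
    exact ((isClosed_Icc.preimage continuous_fst).inter
        (isClosed_Icc.preimage continuous_snd)).inter
        (isClosed_eq ((continuous_evalCX p).comp (continuous_snd.prodMk continuous_fst))
          continuous_const)
  have hZc : IsCompact Z := by
    apply IsCompact.of_isClosed_subset (isCompact_Icc.prod isCompact_Icc) hZclosed
    intro z hz
    exact ⟨hz.1, hz.2.1⟩
  set S : Set ℝ := Prod.fst '' Z with hS
  have hSclosed : IsClosed S := (hZc.image continuous_fst).isClosed
  have hSiff : ∀ y ∈ Set.Icc u v, (y ∈ S ↔ ∃ c', evalCX c' y p = 0) := by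
    intro y hy
    constructor
    · rintro ⟨z, hz, rfl⟩
      exact ⟨z.2, hz.2.2⟩
    · rintro ⟨c', hc'⟩
      exact ⟨(y, c'), ⟨hy, abs_le.mp (hbound y hy c' hc'), hc'⟩, rfl⟩
  -- openness claim
  have hopen : ∀ z ∈ Set.Icc u v, (∃ c', evalCX c' z p = 0) →
      ∃ δ > 0, ∀ y : ℝ, |y - z| < δ → ∃ c', evalCX c' y p = 0 := by
    intro z hz ⟨c₀, hc₀⟩
    set q : Polynomial ℝ := p.map (Polynomial.evalRingHom z) with hq
    have hd : q.derivative.eval c₀ ≠ 0 := by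
      intro h0
      exact hR z hz (res_eq_zero_of_common_root q n hn (hqdeg z) c₀ hc₀ h0)
    obtain ⟨c₁, c₂, h12, hprod⟩ := sign_change q c₀ hc₀ hd
    have hprod' : evalCX c₁ z p * evalCX c₂ z p < 0 := hprod
    set F : ℝ → ℝ := fun y => evalCX c₁ y p * evalCX c₂ y p with hF
    have hFc : Continuous F :=
      ((continuous_evalCX p).comp (continuous_const.prodMk continuous_id)).mul
        ((continuous_evalCX p).comp (continuous_const.prodMk continuous_id))
    have hzF : F z < 0 := hprod'
    have : IsOpen (F ⁻¹' Set.Iio 0) := isOpen_Iio.preimage hFc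
    rw [Metric.isOpen_iff] at this
    obtain ⟨δ, hδ, hball⟩ := this z hzF
    refine ⟨δ, hδ, fun y hy => ?_⟩
    have hyF : F y < 0 := hball (by rwa [Metric.mem_ball, Real.dist_eq])
    exact exists_root_of_mul_neg (fun c' => evalCX c' y p)
      ((continuous_evalCX p).comp (continuous_id.prodMk continuous_const)) c₁ c₂ h12 hyF
  -- connectedness
  haveI : PreconnectedSpace (Set.Icc u v) := Subtype.preconnectedSpace isPreconnected_Icc
  set S' : Set (Set.Icc u v) := Subtype.val ⁻¹' S with hS'
  have hS'closed : IsClosed S' := hSclosed.preimage continuous_subtype_val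
  have hS'open : IsOpen S' := by
    rw [Metric.isOpen_iff]
    intro y hy
    obtain ⟨c', hc'⟩ := (hSiff y y.2).mp hy
    obtain ⟨δ, hδ, hδball⟩ := hopen y y.2 ⟨c', hc'⟩
    refine ⟨δ, hδ, fun z hz => ?_⟩
    rw [Metric.mem_ball, Subtype.dist_eq, Real.dist_eq] at hz
    exact (hSiff z z.2).mpr (hδball z hz)
  have hne : S'.Nonempty := ⟨⟨x, hx⟩, (hSiff x hx).mpr ⟨c, hc⟩⟩
  have : S' = Set.univ := by
    rcases isClopen_iff.mp ⟨hS'closed, hS'open⟩ with h | h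
    · rw [h] at hne; exact absurd hne Set.not_nonempty_empty
    · exact h
  have hwmem : (⟨w, hw⟩ : Set.Icc u v) ∈ S' := by rw [this]; trivial
  obtain ⟨c', hc'⟩ := (hSiff w hw).mp hwmem
  exact hwempty c' hc'

/-- first part of the main theorem: with `α 1 > α 2 > ⋯ > α m` the real
zeros of the resultant `Rₙ` (indexed from 1), if there are
`β 1 > α 1 > β 2 > α 2 > ⋯ > β k > α k` such that each fiber `C_{β i}` is empty and
each fiber `C_{α i}` meets `J` in the empty set, then every point `(c, x₁)` on the
curve `p = 0` with `c ∈ J` satisfies `x₁ < α k`. -/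
theorem statement4 (p : Polynomial (Polynomial ℝ)) (n : ℕ) (hn : 1 ≤ n)
    (hdeg : p.natDegree = n)
    (R : Polynomial ℝ) (hRdef : R = resultant n (n - 1) p (Polynomial.derivative p))
    (hR0 : R ≠ 0)
    (J : Set ℝ) (hJ : J = Set.univ ∨ J = Set.Ici (0 : ℝ))
    (m : ℕ) (hm : 1 ≤ m) (α : ℕ → ℝ)
    (hroots : {x : ℝ | R.eval x = 0} = α '' Set.Icc 1 m)
    (hdec : ∀ i j, 1 ≤ i → i < j → j ≤ m → α j < α i)
    (k : ℕ) (hk1 : 1 ≤ k) (hkm : k ≤ m)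
    (β : ℕ → ℝ)
    (hβ1 : α 1 < β 1)
    (hchain : ∀ i, 2 ≤ i → i ≤ k → α i < β i ∧ β i < α (i - 1))
    (hβempty : ∀ i, 1 ≤ i → i ≤ k → ∀ c : ℝ, evalCX c (β i) p ≠ 0)
    (hαJ : ∀ i, 1 ≤ i → i ≤ k → ∀ c ∈ J, evalCX c (α i) p ≠ 0) :
    ∀ c ∈ J, ∀ x : ℝ, evalCX c x p = 0 → x < α k := by
  intro c hc x hx
  by_contra hlt
  push_neg at hlt
  -- each α j is a root of R
  have hαroot : ∀ j, 1 ≤ j → j ≤ m → R.eval (α j) = 0 := by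
    intro j hj1 hjm
    have : α j ∈ {x : ℝ | R.eval x = 0} := by
      rw [hroots]; exact ⟨j, ⟨hj1, hjm⟩, rfl⟩
    exact this
  -- convert resultant hypothesis
  have hRres : ∀ y : ℝ, R.eval y = resultant n (n-1) (p.map (Polynomial.evalRingHom y))
      (Polynomial.derivative (p.map (Polynomial.evalRingHom y))) := by
    intro y
    rw [hRdef]
    exact eval_resultant p n y
  -- Case A : x is a root of R
  by_cases hxR : R.eval x = 0
  · have hmem : x ∈ α '' Set.Icc 1 m := hroots ▸ hxR
    obtain ⟨j, ⟨hj1, hjm⟩, hjx⟩ := hmem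
    rcases le_or_gt j k with hjk | hjk
    · exact hαJ j hj1 hjk c hc (hjx ▸ hx)
    · have := hdec k j hk1 hjk hjm
      rw [hjx] at this
      linarith
  -- Case B : x is not a root of R, in particular x ≠ α k, so α k < x
  · have hxk : α k < x := by
      rcases eq_or_lt_of_le hlt with h | h
      · exact absurd (h ▸ hαroot k hk1 hkm) hxR
      · exact h
    -- least index i in [1,k] with α i < x
    have hex : ∃ i, 1 ≤ i ∧ i ≤ k ∧ α i < x := ⟨k, hk1, le_refl k, hxk⟩
    classical
    set i := Nat.find hex with hi
    obtain ⟨hi1, hik, hαi⟩ := Nat.find_spec hex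
    have hRy_ne : ∀ (lo : ℝ), (∀ y : ℝ, lo < y → R.eval y ≠ 0) → True := fun _ _ => trivial
    rcases eq_or_lt_of_le hi1 with hone | htwo
    · -- i = 1 : x > α 1, use interval between β 1 and x inside (α 1, ∞)
      have hα1x : α 1 < x := by rw [hone]; exact hαi
      set u := min (β 1) x with hu
      set v := max (β 1) x with hv
      have hsub : ∀ y ∈ Set.Icc u v, α 1 < y := by
        intro y hy
        calc α 1 < min (β 1) x := lt_min hβ1 hα1x
        _ ≤ y := hy.1
      have hRne : ∀ y ∈ Set.Icc u v, resultant n (n-1) (p.map (Polynomial.evalRingHom y))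
          (Polynomial.derivative (p.map (Polynomial.evalRingHom y))) ≠ 0 := by
        intro y hy h0
        have hy0 : R.eval y = 0 := by rw [hRres]; exact h0
        have : y ∈ α '' Set.Icc 1 m := hroots ▸ hy0
        obtain ⟨j, ⟨hj1, hjm⟩, hjy⟩ := this
        have hj_le : α j ≤ α 1 := by
          rcases eq_or_lt_of_le hj1 with h | h
          · rw [← h]
          · exact le_of_lt (hdec 1 j (le_refl 1) h hjm)
        rw [hjy] at hj_le
        exact absurd hj_le (not_le.mpr (hsub y hy))
      exact interval_lemma p n hn hdeg u v (min_le_max) hRne (β 1)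
        ⟨min_le_left _ _, le_max_left _ _⟩ (hβempty 1 (le_refl 1) hk1) x
        ⟨min_le_right _ _, le_max_right _ _⟩ c hx
    · -- i ≥ 2 : α i < x < α (i-1), use interval between β i and x
      have hmin := Nat.find_min hex (m := i - 1) (by omega)
      push_neg at hmin
      have hxle : x ≤ α (i-1) := hmin (by omega) (by omega)
      have hxlt : x < α (i-1) := by
        rcases eq_or_lt_of_le hxle with h | h
        · exact absurd (h ▸ hαroot (i-1) (by omega) (by omega)) hxR
        · exact h
      obtain ⟨hβi1, hβi2⟩ := hchain i htwo hik
      set u := min (β i) x with hu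
      set v := max (β i) x with hv
      have hsub : ∀ y ∈ Set.Icc u v, α i < y ∧ y < α (i-1) := by
        intro y hy
        constructor
        · calc α i < min (β i) x := lt_min hβi1 hαi
          _ ≤ y := hy.1
        · calc y ≤ max (β i) x := hy.2
          _ < α (i-1) := max_lt hβi2 hxlt
      have hRne : ∀ y ∈ Set.Icc u v, resultant n (n-1) (p.map (Polynomial.evalRingHom y))
          (Polynomial.derivative (p.map (Polynomial.evalRingHom y))) ≠ 0 := by
        intro y hy h0
        have hy0 : R.eval y = 0 := by rw [hRres]; exact h0
        have : y ∈ α '' Set.Icc 1 m := hroots ▸ hy0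
        obtain ⟨j, ⟨hj1, hjm⟩, hjy⟩ := this
        obtain ⟨hsy1, hsy2⟩ := hsub y hy
        rcases le_or_gt j (i-1) with hji | hji
        · have : α (i-1) ≤ α j := by
            rcases eq_or_lt_of_le hji with h | h
            · rw [h]
            · exact le_of_lt (hdec j (i-1) hj1 h (by omega))
          rw [hjy] at this
          linarith
        · have : α j ≤ α i := by
            rcases (by omega : i = j ∨ i < j) with h | h
            · rw [h]
            · exact le_of_lt (hdec i j (by omega) h hjm)
          rw [hjy] at this
          linarith
      exact interval_lemma p n hn hdeg u v (min_le_max) hRne (β i)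
        ⟨min_le_left _ _, le_max_left _ _⟩ (hβempty i (by omega) hik) x
        ⟨min_le_right _ _, le_max_right _ _⟩ c hx
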